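/- Let m be a function on the nonnegative integers satisfying c^n Γ_s(n) ≤ m(n) ≤ C^n Γ_s(n) for some constants 0 < c ≤ C and all n ∈ ℕ, where Γ_s(n) = Γ(1+sn) for s ≥ 0 and Γ_s(n) = 1/Γ(1−sn) for s < 0. Then for every formal power series û = Σ u_j x^j with complex coefficients and every s₁ ∈ ℝ, û has Gevrey order s₁ (i.e., Σ u_j x^j / Γ_{s₁}(j) has positive radius of convergence) if and only if the m-moment Borel transform B_m û = Σ (u_j / m(j)) x^j has Gevrey order s₁ − s. -/

import Mathlib

open Real MeasureTheory intervalIntegral Set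


lemma betaInt (x y : ℝ) (hx : 1 ≤ x) (hy : 1 ≤ y) (a b : ℝ) :
    IntervalIntegrable (fun t : ℝ => t ^ (x-1) * (1-t) ^ (y-1)) volume a b :=
  ((continuousOn_id.rpow_const fun _ _ => Or.inr (by linarith)).mul
    ((continuous_const.sub continuous_id).continuousOn.rpow_const fun _ _ =>
      Or.inr (by linarith))).intervalIntegrable

lemma beta_le_one (x y : ℝ) (hx : 1 ≤ x) (hy : 1 ≤ y) :
    (∫ t in (0:ℝ)..1, t ^ (x-1) * (1-t) ^ (y-1)) ≤ 1 := by
  have : (∫ t in (0:ℝ)..1, t ^ (x-1) * (1-t) ^ (y-1)) ≤ ∫ _ in (0:ℝ)..1, (1:ℝ) := by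
    apply intervalIntegral.integral_mono_on (by norm_num) (betaInt x y hx hy 0 1)
      intervalIntegrable_const
    intro t ht
    have h1 : t ^ (x-1) ≤ 1 := Real.rpow_le_one ht.1 ht.2 (by linarith)
    have h2 : (1-t) ^ (y-1) ≤ 1 := Real.rpow_le_one (by linarith [ht.2]) (by linarith [ht.1]) (by linarith)
    calc t ^ (x-1) * (1-t) ^ (y-1) ≤ 1 * 1 :=
      mul_le_mul h1 h2 (Real.rpow_nonneg (by linarith [ht.2]) _) zero_le_one
    _ = 1 := by ring
  simpa using this

lemma beta_ge (x y : ℝ) (hx : 1 ≤ x) (hy : 1 ≤ y) :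
    (4:ℝ) ^ (-(x+y)) ≤ ∫ t in (0:ℝ)..1, t ^ (x-1) * (1-t) ^ (y-1) := by
  have key : ∀ a b : ℝ, 0 ≤ a → a ≤ b → b ≤ 1 →
      (0:ℝ) ≤ ∫ t in a..b, t ^ (x-1) * (1-t) ^ (y-1) := by
    intro a b ha hab hb1
    apply intervalIntegral.integral_nonneg hab
    intro t ht
    exact mul_nonneg (Real.rpow_nonneg (le_trans ha ht.1) _)
      (Real.rpow_nonneg (by linarith [ht.2]) _)
  have split : (∫ t in (0:ℝ)..1, t ^ (x-1) * (1-t) ^ (y-1)) =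
      (∫ t in (0:ℝ)..(1/2), t ^ (x-1) * (1-t) ^ (y-1))
      + (∫ t in (1/2:ℝ)..(3/4), t ^ (x-1) * (1-t) ^ (y-1))
      + (∫ t in (3/4:ℝ)..1, t ^ (x-1) * (1-t) ^ (y-1)) := by
    rw [intervalIntegral.integral_add_adjacent_intervals (betaInt x y hx hy _ _) (betaInt x y hx hy _ _),
      intervalIntegral.integral_add_adjacent_intervals (betaInt x y hx hy _ _) (betaInt x y hx hy _ _)]
  have mid : (1/4:ℝ) * ((1/2:ℝ) ^ (x-1) * (1/4:ℝ) ^ (y-1)) ≤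
      ∫ t in (1/2:ℝ)..(3/4), t ^ (x-1) * (1-t) ^ (y-1) := by
    have : (∫ _ in (1/2:ℝ)..(3/4), ((1/2:ℝ) ^ (x-1) * (1/4:ℝ) ^ (y-1))) ≤
        ∫ t in (1/2:ℝ)..(3/4), t ^ (x-1) * (1-t) ^ (y-1) := by
      apply intervalIntegral.integral_mono_on (by norm_num) intervalIntegrable_const
        (betaInt x y hx hy _ _)
      intro t ht
      have h1 : (1/2:ℝ) ^ (x-1) ≤ t ^ (x-1) :=
        Real.rpow_le_rpow (by norm_num) ht.1 (by linarith)
      have h2 : (1/4:ℝ) ^ (y-1) ≤ (1-t) ^ (y-1) :=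
        Real.rpow_le_rpow (by norm_num) (by linarith [ht.2]) (by linarith)
      exact mul_le_mul h1 h2 (Real.rpow_nonneg (by norm_num) _)
        (Real.rpow_nonneg (by linarith [ht.1]) _)
    rw [intervalIntegral.integral_const] at this
    calc (1/4:ℝ) * ((1/2:ℝ) ^ (x-1) * (1/4:ℝ) ^ (y-1))
        = ((3/4:ℝ) - 1/2) • ((1/2:ℝ) ^ (x-1) * (1/4:ℝ) ^ (y-1)) := by norm_num
      _ ≤ _ := this
  have lower : (4:ℝ) ^ (-(x+y)) ≤ (1/4:ℝ) * ((1/2:ℝ) ^ (x-1) * (1/4:ℝ) ^ (y-1)) := by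
    have e1 : (1/4:ℝ) ^ (x-1) ≤ (1/2:ℝ) ^ (x-1) :=
      Real.rpow_le_rpow (by norm_num) (by norm_num) (by linarith)
    have e2 : (4:ℝ) ^ (-(x+y)) = (1/4:ℝ) ^ (x+y) := by
      rw [Real.rpow_neg (by norm_num), ← Real.inv_rpow (by norm_num)]
      norm_num
    have e3 : (1/4:ℝ) ^ (x+y) ≤ (1/4:ℝ) ^ (x+y-1) :=
      Real.rpow_le_rpow_of_exponent_ge (by norm_num) (by norm_num) (by linarith)
    have e4 : (1/4:ℝ) ^ (x+y-1) = (1/4:ℝ) * ((1/4:ℝ) ^ (x-1) * (1/4:ℝ) ^ (y-1)) := by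
      have h : x+y-1 = 1 + ((x-1)+(y-1)) := by ring
      rw [h, Real.rpow_add (by norm_num : (0:ℝ) < 1/4), Real.rpow_one,
        Real.rpow_add (by norm_num : (0:ℝ) < 1/4)]
    rw [e2]
    calc (1/4:ℝ) ^ (x+y) ≤ (1/4:ℝ) ^ (x+y-1) := e3
      _ = (1/4:ℝ) * ((1/4:ℝ) ^ (x-1) * (1/4:ℝ) ^ (y-1)) := e4
      _ ≤ (1/4:ℝ) * ((1/2:ℝ) ^ (x-1) * (1/4:ℝ) ^ (y-1)) := by
          have := Real.rpow_nonneg (show (0:ℝ) ≤ 1/4 by norm_num) (y-1)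
          nlinarith [Real.rpow_nonneg (show (0:ℝ) ≤ 1/4 by norm_num) (x-1)]
  calc (4:ℝ) ^ (-(x+y)) ≤ (1/4:ℝ) * ((1/2:ℝ) ^ (x-1) * (1/4:ℝ) ^ (y-1)) := lower
    _ ≤ ∫ t in (1/2:ℝ)..(3/4), t ^ (x-1) * (1-t) ^ (y-1) := mid
    _ ≤ _ := by
        rw [split]
        have := key 0 (1/2) le_rfl (by norm_num) (by norm_num)
        have := key (3/4) 1 (by norm_num) (by norm_num) le_rfl
        linarith [key 0 (1/2) le_rfl (by norm_num) (by norm_num),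
          key (3/4) 1 (by norm_num) (by norm_num) le_rfl]

lemma betaEq (x y : ℝ) (hx : 0 < x) (hy : 0 < y) :
    Real.Gamma x * Real.Gamma y =
      Real.Gamma (x + y) * ∫ t in (0:ℝ)..1, t ^ (x-1) * (1-t) ^ (y-1) := by
  have h := Complex.Gamma_mul_Gamma_eq_betaIntegral (s := (x:ℂ)) (t := (y:ℂ))
    (by simpa using hx) (by simpa using hy)
  have hβ : Complex.betaIntegral x y =
      ((∫ t in (0:ℝ)..1, t ^ (x-1) * (1-t) ^ (y-1) : ℝ) : ℂ) := by
    rw [Complex.betaIntegral, ← intervalIntegral.integral_ofReal]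
    refine intervalIntegral.integral_congr fun t ht => ?_
    rw [Set.uIcc_of_le (by norm_num : (0:ℝ) ≤ 1)] at ht
    rw [Complex.ofReal_mul, Complex.ofReal_cpow ht.1, Complex.ofReal_cpow (by linarith [ht.2] : (0:ℝ) ≤ 1 - t)]
    push_cast
    ring
  rw [hβ] at h
  have := congrArg Complex.re h
  simpa [← Complex.ofReal_mul, Complex.Gamma_ofReal, ← Complex.ofReal_add] using this

lemma gamma_prod_le (x y : ℝ) (hx : 1 ≤ x) (hy : 1 ≤ y) :
    Real.Gamma x * Real.Gamma y ≤ Real.Gamma (x+y) := by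
  rw [betaEq x y (by linarith) (by linarith)]
  have hG : 0 < Real.Gamma (x+y) := Real.Gamma_pos_of_pos (by linarith)
  nlinarith [beta_le_one x y hx hy]

lemma gamma_prod_ge (x y : ℝ) (hx : 1 ≤ x) (hy : 1 ≤ y) :
    Real.Gamma (x+y) ≤ (4:ℝ) ^ (x+y) * (Real.Gamma x * Real.Gamma y) := by
  rw [betaEq x y (by linarith) (by linarith)]
  have hG : 0 < Real.Gamma (x+y) := Real.Gamma_pos_of_pos (by linarith)
  have h4 : (0:ℝ) < (4:ℝ) ^ (x+y) := Real.rpow_pos_of_pos (by norm_num) _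
  have h4' : (4:ℝ) ^ (x+y) * (4:ℝ) ^ (-(x+y)) = 1 := by
    rw [← Real.rpow_add (by norm_num), show (x+y) + (-(x+y)) = 0 by ring, Real.rpow_zero]
  have hmul := mul_le_mul_of_nonneg_left (beta_ge x y hx hy) (mul_pos h4 hG).le
  have h4'' : Real.Gamma (x+y) * ((4:ℝ)^(x+y) * (4:ℝ)^(-(x+y))) = Real.Gamma (x+y) := by
    rw [h4']; ring
  nlinarith [hmul, h4'']

lemma key_lemma (p q : ℝ) (hp : 0 ≤ p) (hq : 0 ≤ q) : ∃ K : ℝ, 1 ≤ K ∧ ∀ n : ℕ,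
    Real.Gamma (1+p*n) * Real.Gamma (1+q*n) ≤ K * K^n * Real.Gamma (1+(p+q)*n) ∧
    Real.Gamma (1+(p+q)*n) ≤ K * K^n * (Real.Gamma (1+p*n) * Real.Gamma (1+q*n)) := by
  have h4 : (1:ℝ) ≤ (4:ℝ) ^ (p+q) := Real.one_le_rpow (by norm_num) (by linarith)
  refine ⟨16 * (1+p+q) * (4:ℝ) ^ (p+q), by nlinarith, fun n => ?_⟩
  set K := 16 * (1+p+q) * (4:ℝ) ^ (p+q) with hKdef
  have hK1 : (1:ℝ) ≤ K := by rw [hKdef]; nlinarith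
  have hpn : (0:ℝ) ≤ p * n := mul_nonneg hp n.cast_nonneg
  have hqn : (0:ℝ) ≤ q * n := mul_nonneg hq n.cast_nonneg
  have hx : (1:ℝ) ≤ 1 + p*n := by linarith
  have hy : (1:ℝ) ≤ 1 + q*n := by linarith
  have hsum : (1+p*n) + (1+q*n) = (1+(p+q)*n) + 1 := by ring
  have hGpos : 0 < Real.Gamma (1+(p+q)*n) := Real.Gamma_pos_of_pos (by nlinarith)
  have hGp : 0 < Real.Gamma (1+p*n) := Real.Gamma_pos_of_pos (by linarith)
  have hGq : 0 < Real.Gamma (1+q*n) := Real.Gamma_pos_of_pos (by linarith)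
  have hadd : Real.Gamma ((1+p*n) + (1+q*n)) = (1+(p+q)*n) * Real.Gamma (1+(p+q)*n) := by
    rw [hsum, Real.Gamma_add_one (by nlinarith)]
  have hbern : 1 + (p+q)*n ≤ (1+(p+q))^n := by
    have := one_add_mul_le_pow (a := p+q) (by linarith) n
    calc 1 + (p+q)*(n:ℝ) = 1 + (n:ℝ)*(p+q) := by ring
      _ ≤ (1+(p+q))^n := this
  have hKpow : (1+(p+q))^n ≤ K^n := by
    apply pow_le_pow_left₀ (by linarith)
    rw [hKdef]; nlinarith
  constructor
  · calc Real.Gamma (1+p*n) * Real.Gamma (1+q*n)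
        ≤ Real.Gamma ((1+p*n)+(1+q*n)) := gamma_prod_le _ _ hx hy
      _ = (1+(p+q)*n) * Real.Gamma (1+(p+q)*n) := hadd
      _ ≤ (1+(p+q))^n * Real.Gamma (1+(p+q)*n) := by
          exact mul_le_mul_of_nonneg_right hbern hGpos.le
      _ ≤ K * K^n * Real.Gamma (1+(p+q)*n) := by
          have : (1+(p+q))^n ≤ K * K^n := by nlinarith [pow_pos (lt_of_lt_of_le one_pos hK1) n]
          exact mul_le_mul_of_nonneg_right this hGpos.le
  · have h1 : Real.Gamma (1+(p+q)*n) ≤ Real.Gamma ((1+p*n)+(1+q*n)) := by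
      rw [hadd]; nlinarith
    have h2 : Real.Gamma ((1+p*n)+(1+q*n)) ≤
        (4:ℝ) ^ ((1+p*n)+(1+q*n)) * (Real.Gamma (1+p*n) * Real.Gamma (1+q*n)) :=
      gamma_prod_ge _ _ hx hy
    have h3 : (4:ℝ) ^ ((1+p*n)+(1+q*n)) = 16 * ((4:ℝ)^(p+q))^n := by
      have : (1+p*n) + (1+q*n) = 2 + (p+q)*(n:ℝ) := by ring
      rw [this, Real.rpow_add (by norm_num), Real.rpow_mul (by norm_num) (p+q),
        Real.rpow_natCast]
      norm_num
    have h5 : 16 * ((4:ℝ)^(p+q))^n ≤ K * K^n := by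
      have hb : ((4:ℝ)^(p+q))^n ≤ K^n := by
        apply pow_le_pow_left₀ (by linarith)
        rw [hKdef]; nlinarith
      have hK16 : (16:ℝ) ≤ K := by rw [hKdef]; nlinarith
      nlinarith [mul_le_mul_of_nonneg_left hb (by norm_num : (0:ℝ) ≤ 16),
        mul_le_mul_of_nonneg_right hK16 (pow_pos (lt_of_lt_of_le one_pos hK1) n).le]
    calc Real.Gamma (1+(p+q)*n) ≤ Real.Gamma ((1+p*n)+(1+q*n)) := h1
      _ ≤ (4:ℝ) ^ ((1+p*n)+(1+q*n)) * (Real.Gamma (1+p*n) * Real.Gamma (1+q*n)) := h2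
      _ = 16 * ((4:ℝ)^(p+q))^n * (Real.Gamma (1+p*n) * Real.Gamma (1+q*n)) := by rw [h3]
      _ ≤ K * K^n * (Real.Gamma (1+p*n) * Real.Gamma (1+q*n)) := by
          exact mul_le_mul_of_nonneg_right h5 (by positivity)

noncomputable def GammaS (s : ℝ) (n : ℕ) : ℝ :=
  if 0 ≤ s then Real.Gamma (1 + s * n) else (Real.Gamma (1 - s * n))⁻¹

lemma GammaS_of_nonneg {s : ℝ} (h : 0 ≤ s) (n : ℕ) :
    GammaS s n = Real.Gamma (1 + s * n) := if_pos h

lemma GammaS_of_neg {s : ℝ} (h : s < 0) (n : ℕ) :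
    GammaS s n = (Real.Gamma (1 + (-s) * n))⁻¹ := by
  rw [GammaS, if_neg (not_le.mpr h), show (1:ℝ) - s*n = 1 + (-s)*n by ring]

lemma GammaS_pos (s : ℝ) (n : ℕ) : 0 < GammaS s n := by
  rcases le_or_gt 0 s with h | h
  · rw [GammaS_of_nonneg h]
    exact Real.Gamma_pos_of_pos (by nlinarith [mul_nonneg h n.cast_nonneg])
  · rw [GammaS_of_neg h]
    exact inv_pos.mpr (Real.Gamma_pos_of_pos
      (by nlinarith [mul_nonneg (neg_nonneg.mpr h.le) n.cast_nonneg]))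

lemma ratio_helper {T X Y Z W : ℝ} (hT : 0 < T) (hX : 0 < X) (hY : 0 < Y) (hZ : 0 < Z)
    (hW : 0 < W) (h : X * W ≤ T * (Y * Z)) : X * Z⁻¹ ≤ T * (Y * W⁻¹) := by
  rw [show X * Z⁻¹ = X / Z from (div_eq_mul_inv X Z).symm,
    show T * (Y * W⁻¹) = T * Y / W by rw [div_eq_mul_inv]; ring,
    div_le_div_iff₀ hZ hW]
  nlinarith

lemma central (a b : ℝ) : ∃ K : ℝ, 1 ≤ K ∧ ∀ n : ℕ,
    GammaS (a+b) n ≤ K * K^n * (GammaS a n * GammaS b n) ∧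
    GammaS a n * GammaS b n ≤ K * K^n * GammaS (a+b) n := by
  have mixed : ∀ a b : ℝ, 0 ≤ a → b < 0 → ∃ K : ℝ, 1 ≤ K ∧ ∀ n : ℕ,
      GammaS (a+b) n ≤ K * K^n * (GammaS a n * GammaS b n) ∧
      GammaS a n * GammaS b n ≤ K * K^n * GammaS (a+b) n := by
    intro a b ha hb
    rcases le_or_gt 0 (a+b) with hab | hab
    · obtain ⟨K, hK1, hKn⟩ := key_lemma (a+b) (-b) hab (by linarith)
      refine ⟨K, hK1, fun n => ?_⟩
      have hT : 0 < K * K^n := by positivity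
      obtain ⟨h1, h2⟩ := hKn n
      rw [show (a+b) + (-b) = a by ring] at h1 h2
      have gp : ∀ r : ℝ, 0 ≤ r → 0 < Real.Gamma (1+r*n) := fun r hr =>
        Real.Gamma_pos_of_pos (by nlinarith [mul_nonneg hr n.cast_nonneg])
      rw [GammaS_of_nonneg ha, GammaS_of_neg hb, GammaS_of_nonneg hab]
      constructor
      · have := ratio_helper hT (gp _ hab) (gp _ ha) one_pos (gp _ (by linarith : (0:ℝ) ≤ -b))
          (by rw [mul_one] at *; linarith)
        simpa using this
      · have := ratio_helper hT (gp _ ha) (gp _ hab) (gp _ (by linarith : (0:ℝ) ≤ -b)) one_pos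
          (by rw [mul_one] at *; linarith)
        simpa using this
    · obtain ⟨K, hK1, hKn⟩ := key_lemma a (-(a+b)) ha (by linarith)
      refine ⟨K, hK1, fun n => ?_⟩
      have hT : 0 < K * K^n := by positivity
      obtain ⟨h1, h2⟩ := hKn n
      rw [show a + (-(a+b)) = -b by ring] at h1 h2
      have gp : ∀ r : ℝ, 0 ≤ r → 0 < Real.Gamma (1+r*n) := fun r hr =>
        Real.Gamma_pos_of_pos (by nlinarith [mul_nonneg hr n.cast_nonneg])
      rw [GammaS_of_nonneg ha, GammaS_of_neg hb, GammaS_of_neg hab]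
      constructor
      · have := ratio_helper hT one_pos (gp _ ha) (gp _ (by linarith : (0:ℝ) ≤ -(a+b)))
          (gp _ (by linarith : (0:ℝ) ≤ -b)) (by rw [one_mul] at *; linarith)
        simpa using this
      · have := ratio_helper hT (gp _ ha) one_pos (gp _ (by linarith : (0:ℝ) ≤ -b))
          (gp _ (by linarith : (0:ℝ) ≤ -(a+b))) (by rw [one_mul] at *; linarith)
        simpa using this
  rcases le_or_gt 0 a with ha | ha <;> rcases le_or_gt 0 b with hb | hb
  · obtain ⟨K, hK1, hKn⟩ := key_lemma a b ha hb
    refine ⟨K, hK1, fun n => ?_⟩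
    obtain ⟨h1, h2⟩ := hKn n
    rw [GammaS_of_nonneg ha, GammaS_of_nonneg hb, GammaS_of_nonneg (by linarith : 0 ≤ a+b)]
    exact ⟨h2, h1⟩
  · exact mixed a b ha hb
  · obtain ⟨K, hK1, hKn⟩ := mixed b a hb ha
    refine ⟨K, hK1, fun n => ?_⟩
    obtain ⟨h1, h2⟩ := hKn n
    rw [show b + a = a + b by ring] at h1 h2
    rw [show GammaS b n * GammaS a n = GammaS a n * GammaS b n by ring] at h1 h2
    exact ⟨h1, h2⟩
  · obtain ⟨K, hK1, hKn⟩ := key_lemma (-a) (-b) (by linarith) (by linarith)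
    refine ⟨K, hK1, fun n => ?_⟩
    have hT : 0 < K * K^n := by positivity
    obtain ⟨h1, h2⟩ := hKn n
    rw [show -a + -b = -(a+b) by ring] at h1 h2
    have gp : ∀ r : ℝ, 0 ≤ r → 0 < Real.Gamma (1+r*n) := fun r hr =>
      Real.Gamma_pos_of_pos (by nlinarith [mul_nonneg hr n.cast_nonneg])
    rw [GammaS_of_neg ha, GammaS_of_neg hb, GammaS_of_neg (by linarith : a+b < 0)]
    have hga : 0 < Real.Gamma (1+(-a)*n) := gp _ (by linarith)
    have hgb : 0 < Real.Gamma (1+(-b)*n) := gp _ (by linarith)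
    have hgab : 0 < Real.Gamma (1+(-(a+b))*n) := gp _ (by linarith)
    constructor
    · have := ratio_helper hT one_pos one_pos hgab (mul_pos hga hgb)
        (by simpa using h1)
      rw [one_mul, mul_inv] at this
      simpa using this
    · have := ratio_helper hT one_pos one_pos (mul_pos hga hgb) hgab
        (by simpa using h2)
      rw [one_mul, mul_inv] at this
      simpa using this

/-- If `m` grows like `Γ_s`, then a formal power series `Σ u_j x^j` has Gevrey order `s₁`
iff its `m`-moment Borel transform `Σ (u_j/m(j)) x^j` has Gevrey order `s₁ − s`. -/
theorem borel_gevrey_shift (m : ℕ → ℝ) (s : ℝ) (c C : ℝ) (hc : 0 < c) (hcC : c ≤ C)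
    (hm : ∀ n, c ^ n * GammaS s n ≤ m n ∧ m n ≤ C ^ n * GammaS s n)
    (u : ℕ → ℂ) (s₁ : ℝ) :
    (∃ A B : ℝ, 0 < A ∧ 0 < B ∧ ∀ j, ‖u j‖ ≤ A * B ^ j * GammaS s₁ j) ↔
    (∃ A B : ℝ, 0 < A ∧ 0 < B ∧ ∀ j, ‖u j / (m j : ℂ)‖ ≤ A * B ^ j * GammaS (s₁ - s) j) := by
  obtain ⟨K, hK1, hKn⟩ := central s (s₁ - s)
  have hsum : s + (s₁ - s) = s₁ := by ring
  simp only [hsum] at hKn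
  have hK0 : (0:ℝ) < K := lt_of_lt_of_le one_pos hK1
  have hC : (0:ℝ) < C := lt_of_lt_of_le hc hcC
  have mpos : ∀ j, 0 < m j := fun j =>
    lt_of_lt_of_le (mul_pos (pow_pos hc j) (GammaS_pos s j)) (hm j).1
  have hnorm : ∀ j, ‖u j / (m j : ℂ)‖ = ‖u j‖ / m j := by
    intro j
    rw [norm_div, Complex.norm_real, Real.norm_eq_abs, abs_of_pos (mpos j)]
  constructor
  · rintro ⟨A, B, hA, hB, h⟩
    refine ⟨A * K, B * K / c, by positivity, by positivity, fun j => ?_⟩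
    have hGs := GammaS_pos s j
    have hG1 := GammaS_pos s₁ j
    have hG2 := GammaS_pos (s₁ - s) j
    rw [hnorm j]
    have step1 : ‖u j‖ / m j ≤ (A * B ^ j * GammaS s₁ j) / (c ^ j * GammaS s j) :=
      div_le_div₀ (by positivity) (h j) (by positivity) (hm j).1
    have step2 : GammaS s₁ j ≤ K * K ^ j * (GammaS s j * GammaS (s₁ - s) j) := (hKn j).1
    calc ‖u j‖ / m j ≤ (A * B ^ j * GammaS s₁ j) / (c ^ j * GammaS s j) := step1
      _ ≤ (A * B ^ j * (K * K ^ j * (GammaS s j * GammaS (s₁ - s) j))) / (c ^ j * GammaS s j) := by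
          exact (div_le_div_iff_of_pos_right (by positivity)).mpr
            (mul_le_mul_of_nonneg_left step2 (by positivity))
      _ = A * K * (B * K / c) ^ j * GammaS (s₁ - s) j := by
          field_simp
          rw [div_pow, mul_comm (c ^ j), div_mul_cancel₀ _ (pow_ne_zero j hc.ne'), mul_pow, mul_comm]
  · rintro ⟨A, B, hA, hB, h⟩
    refine ⟨A * K, B * C * K, by positivity, by positivity, fun j => ?_⟩
    have hGs := GammaS_pos s j
    have hG1 := GammaS_pos s₁ j
    have hG2 := GammaS_pos (s₁ - s) j
    have humj : ‖u j‖ = ‖u j / (m j : ℂ)‖ * m j := by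
      rw [hnorm j, div_mul_cancel₀ _ (ne_of_gt (mpos j))]
    rw [humj]
    have step1 : ‖u j / (m j : ℂ)‖ * m j ≤ (A * B ^ j * GammaS (s₁ - s) j) * (C ^ j * GammaS s j) :=
      mul_le_mul (h j) (hm j).2 (mpos j).le (by positivity)
    have step2 : GammaS s j * GammaS (s₁ - s) j ≤ K * K ^ j * GammaS s₁ j := (hKn j).2
    calc ‖u j / (m j : ℂ)‖ * m j ≤ (A * B ^ j * GammaS (s₁ - s) j) * (C ^ j * GammaS s j) := step1
      _ = (A * B ^ j * C ^ j) * (GammaS s j * GammaS (s₁ - s) j) := by ring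
      _ ≤ (A * B ^ j * C ^ j) * (K * K ^ j * GammaS s₁ j) := by
          exact mul_le_mul_of_nonneg_left step2 (by positivity)
      _ = A * K * (B * C * K) ^ j * GammaS s₁ j := by
          rw [mul_pow, mul_pow]; ring
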